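/- The Lie complexity of the Fibonacci word f satisfies: L_f(n) = 1 if n = 0, or n = F_k for some k ≥ 4, or n = F_k + F_{k−3} for some k ≥ 4; L_f(n) = 2 if n ∈ {1, 2}; and L_f(n) = 0 otherwise, where F_k are the Fibonacci numbers with F_0 = 0, F_1 = 1. -/

import Mathlib

variable {α : Type*}

/-- `u` occurs in the infinite word `w` at position `i`. -/
def FactorAt (w : ℕ → α) (i : ℕ) (u : List α) : Prop :=
  u = (List.range u.length).map fun k => w (i + k)

/-- The set of (finite) factors of the right-infinite word `w`. -/
def Fac (w : ℕ → α) : Set (List α) := {u | ∃ i, FactorAt w i u}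

/-- The Lie complexity: the number of rotation classes of length-`n` words all of
whose members are factors of `w`. -/
noncomputable def LieComplexity (w : ℕ → α) (n : ℕ) : ℕ :=
  Set.ncard {q : Quotient (List.IsRotated.setoid α) |
    ∃ u : List α, Quotient.mk _ u = q ∧ u.length = n ∧ ∀ v, u.IsRotated v → v ∈ Fac w}

/-- The Fibonacci morphism `0 ↦ 01`, `1 ↦ 0`. -/
def fibMorph (a : ℕ) : List ℕ := if a = 0 then [0, 1] else [0]

/-- Iterates of the Fibonacci morphism applied to `0`. -/
def fibStr : ℕ → List ℕ
  | 0 => [0]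
  | k + 1 => (fibStr k).flatMap fibMorph

/-- The Fibonacci word, the fixed point of `0 ↦ 01`, `1 ↦ 0`.  (The prefix
`fibStr (n + 2)` has length `> n`, and these prefixes are nested.) -/
def fibWord (n : ℕ) : ℕ := (fibStr (n + 2)).getD n 0

/-! ### Basic lemmas -/

/-- abbreviation for the morphism on words -/
def sig (w : List ℕ) : List ℕ := w.flatMap fibMorph

lemma sig_append (a b : List ℕ) : sig (a ++ b) = sig a ++ sig b :=
  List.flatMap_append (xs := a) (ys := b) (f := fibMorph)

lemma sig_cons (a : ℕ) (w : List ℕ) : sig (a :: w) = fibMorph a ++ sig w := rfl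

lemma sig_nil : sig [] = [] := rfl

lemma fibStr_succ (k : ℕ) : fibStr (k + 1) = sig (fibStr k) := rfl

lemma fibStr_zero : fibStr 0 = [0] := rfl

lemma fibStr_add_two (k : ℕ) : fibStr (k + 2) = fibStr (k + 1) ++ fibStr k := by
  induction k with
  | zero => decide
  | succ k ih =>
    calc fibStr (k + 3) = sig (fibStr (k + 2)) := rfl
    _ = sig (fibStr (k + 1) ++ fibStr k) := by rw [ih]
    _ = sig (fibStr (k + 1)) ++ sig (fibStr k) := sig_append _ _
    _ = fibStr (k + 2) ++ fibStr (k + 1) := rfl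

lemma fibStr_length (k : ℕ) : (fibStr k).length = Nat.fib (k + 2) := by
  induction k using Nat.strong_induction_on with
  | _ k ih =>
    match k with
    | 0 => decide
    | 1 => decide
    | (k+2) =>
      have h1 : Nat.fib (k + 4) = Nat.fib (k + 2) + Nat.fib (k + 3) := Nat.fib_add_two
      rw [fibStr_add_two, List.length_append, ih (k+1) (by omega), ih k (by omega)]
      have e1 : k + 1 + 2 = k + 3 := by omega
      have e2 : k + 2 + 2 = k + 4 := by omega
      rw [e1, e2, h1]
      omega

lemma fibStr_ne_nil (k : ℕ) : fibStr k ≠ [] := by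
  intro h
  have h1 := fibStr_length k
  rw [h] at h1
  have : 0 < Nat.fib (k+2) := Nat.fib_pos.mpr (by omega)
  simp at h1
  omega

lemma fibStr_prefix (k : ℕ) : fibStr k <+: fibStr (k + 1) := by
  match k with
  | 0 => decide
  | (k+1) => rw [fibStr_add_two]; exact List.prefix_append _ _

lemma fibStr_prefix_le {k m : ℕ} (h : k ≤ m) : fibStr k <+: fibStr m := by
  induction m with
  | zero => rw [Nat.le_zero.mp h]
  | succ m ih =>
    rcases Nat.lt_or_ge k (m+1) with h' | h'
    · exact (ih (by omega)).trans (fibStr_prefix m)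
    · rw [Nat.le_antisymm h h']

lemma lt_fib_add_four (m : ℕ) : m + 3 ≤ Nat.fib (m + 4) := by
  induction m with
  | zero => decide
  | succ m ih =>
    have h2 : 1 ≤ Nat.fib (m + 3) := Nat.fib_pos.mpr (by omega)
    have h1 : Nat.fib (m + 5) = Nat.fib (m + 3) + Nat.fib (m + 4) := Nat.fib_add_two
    have e : m + 1 + 4 = m + 5 := by omega
    rw [e, h1]
    omega

lemma lt_fibStr_length (n : ℕ) : n < (fibStr (n + 2)).length := by
  rw [fibStr_length]
  have := lt_fib_add_four n
  have e : n + 2 + 2 = n + 4 := by omega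
  rw [e]
  omega
/-! ### FactorAt machinery -/

lemma factorAt_nil (w : ℕ → α) (i : ℕ) : FactorAt w i [] := rfl

lemma factorAt_iff {w : ℕ → α} {i : ℕ} {u : List α} :
    FactorAt w i u ↔ ∀ (j : ℕ) (h : j < u.length), u[j] = w (i + j) := by
  constructor
  · intro h j hj
    rw [List.getElem_of_eq h hj, List.getElem_map, List.getElem_range]
  · intro h
    apply List.ext_getElem (by simp)
    intro j h1 h2
    rw [List.getElem_map, List.getElem_range]
    exact h j h1

lemma factorAt_cons {w : ℕ → α} {i : ℕ} {a : α} {u : List α} :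
    FactorAt w i (a :: u) ↔ w i = a ∧ FactorAt w (i + 1) u := by
  rw [factorAt_iff, factorAt_iff]
  constructor
  · intro h
    refine ⟨(h 0 (by simp)).symm, fun j hj => ?_⟩
    have := h (j + 1) (by simpa using Nat.succ_lt_succ hj)
    simpa [Nat.add_assoc, Nat.add_comm 1 j] using this
  · rintro ⟨h0, h⟩ j hj
    match j with
    | 0 => simpa using h0.symm
    | (j+1) =>
      have := h j (by simpa using Nat.lt_of_succ_lt_succ hj)
      simpa [Nat.add_assoc, Nat.add_comm 1 j] using this

lemma factorAt_append {w : ℕ → α} {i : ℕ} {u v : List α} :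
    FactorAt w i (u ++ v) ↔ FactorAt w i u ∧ FactorAt w (i + u.length) v := by
  induction u generalizing i with
  | nil => simp [factorAt_nil]
  | cons a u ih =>
    simp only [List.cons_append, factorAt_cons, ih, List.length_cons]
    have e : i + 1 + u.length = i + (u.length + 1) := by omega
    rw [e]
    tauto

lemma fac_infix {w : ℕ → α} {u v : List α} (hv : v <:+: u) (hu : u ∈ Fac w) : v ∈ Fac w := by
  obtain ⟨i, hi⟩ := hu
  obtain ⟨s, t, rfl⟩ := hv
  rw [factorAt_append, factorAt_append] at hi
  exact ⟨i + s.length, hi.1.2⟩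

lemma fac_extend {w : ℕ → α} {u : List α} (hu : u ∈ Fac w) :
    ∃ a, (∃ m, w m = a) ∧ u ++ [a] ∈ Fac w := by
  obtain ⟨i, hi⟩ := hu
  refine ⟨w (i + u.length), ⟨_, rfl⟩, i, ?_⟩
  rw [factorAt_append]
  exact ⟨hi, by rw [factorAt_cons]; exact ⟨rfl, factorAt_nil _ _⟩⟩

/-! ### fibWord basics -/

lemma fibStr_getElem_eq_fibWord (k j : ℕ) (h : j < (fibStr k).length) :
    (fibStr k)[j] = fibWord j := by
  have hlt := lt_fibStr_length j
  rcases Nat.le_total k (j + 2) with hk | hk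
  · have hp := fibStr_prefix_le hk
    rw [fibWord, List.getD_eq_getElem _ _ hlt, hp.getElem h]
  · have hp := fibStr_prefix_le hk
    rw [fibWord, List.getD_eq_getElem _ _ hlt, hp.getElem hlt]

lemma fibStr_factorAt (k : ℕ) : FactorAt fibWord 0 (fibStr k) := by
  rw [factorAt_iff]
  intro j hj
  rw [fibStr_getElem_eq_fibWord k j hj, Nat.zero_add]

lemma fac_iff_infix {u : List ℕ} : u ∈ Fac fibWord ↔ ∃ k, u <:+: fibStr k := by
  constructor
  · rintro ⟨i, hi⟩
    refine ⟨i + u.length + 2, ?_⟩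
    have hlen : i + u.length ≤ (fibStr (i + u.length + 2)).length :=
      le_of_lt (lt_fibStr_length _)
    refine List.infix_iff_prefix_suffix.mpr ⟨(fibStr (i + u.length + 2)).drop i,
      ?_, List.drop_suffix _ _⟩
    rw [List.prefix_iff_eq_take]
    apply List.ext_getElem (by rw [List.length_take, List.length_drop]; omega)
    intro j h1 h2
    rw [List.getElem_take, List.getElem_drop,
      fibStr_getElem_eq_fibWord _ _ (by omega), factorAt_iff.mp hi j h1]
  · rintro ⟨k, hk⟩
    exact fac_infix hk ⟨0, fibStr_factorAt k⟩

lemma fibWord_binary (n : ℕ) : fibWord n = 0 ∨ fibWord n = 1 := by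
  have h : ∀ k, ∀ a ∈ fibStr k, a = 0 ∨ a = 1 := by
    intro k
    induction k with
    | zero => decide
    | succ k ih =>
      intro a ha
      rw [fibStr_succ, sig] at ha
      obtain ⟨b, _, hb⟩ := List.mem_flatMap.mp ha
      by_cases hb0 : b = 0 <;> simp [fibMorph, hb0] at hb <;> omega
  have hlt := lt_fibStr_length n
  rw [fibWord, List.getD_eq_getElem _ _ hlt]
  exact h _ _ (List.getElem_mem hlt)

lemma fac_binary {u : List ℕ} (hu : u ∈ Fac fibWord) : ∀ a ∈ u, a = 0 ∨ a = 1 := by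
  obtain ⟨i, hi⟩ := hu
  intro a ha
  rw [hi] at ha
  obtain ⟨j, _, rfl⟩ := List.mem_map.mp ha
  exact fibWord_binary _
/-! ### Infix of append splitting -/

lemma append_eq_append_split {a b c d : List α} (h : a ++ b = c ++ d)
    (hl : c.length ≤ a.length) : ∃ e, a = c ++ e ∧ d = e ++ b := by
  have hc : c = a.take c.length := by
    have h1 : List.take c.length (a ++ b) = List.take c.length (c ++ d) := by rw [h]
    rw [List.take_append, show c.length - a.length = 0 by omega,
      List.take_zero, List.append_nil] at h1
    rw [List.take_append, Nat.sub_self, List.take_zero, List.append_nil,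
      List.take_of_length_le (le_refl _)] at h1
    exact h1.symm
  have ha : a = c ++ a.drop c.length :=
    calc a = a.take c.length ++ a.drop c.length := (List.take_append_drop _ _).symm
    _ = c ++ a.drop c.length := by rw [← hc]
  refine ⟨a.drop c.length, ha, ?_⟩
  have h2 : c ++ d = c ++ (a.drop c.length ++ b) := by
    rw [← h]
    conv_lhs => rw [ha]
    rw [List.append_assoc]
  exact List.append_cancel_left h2

lemma infix_append_split {l x y : List α} (h : l <:+: x ++ y) :
    l <:+: x ∨ l <:+: y ∨
      ∃ l₁ l₂, l = l₁ ++ l₂ ∧ l₁ ≠ [] ∧ l₂ ≠ [] ∧ l₁ <:+ x ∧ l₂ <+: y := by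
  obtain ⟨s, t, hst⟩ := h
  rw [List.append_assoc] at hst
  rcases Nat.le_total x.length s.length with hxs | hxs
  · obtain ⟨e, hs, hy⟩ := append_eq_append_split hst hxs
    exact Or.inr (Or.inl ⟨e, t, by rw [hy, List.append_assoc]⟩)
  · obtain ⟨e, hx, hlt⟩ := append_eq_append_split hst.symm hxs
    rcases Nat.le_total e.length l.length with hle | hle
    · obtain ⟨e₂, hle2, hy⟩ := append_eq_append_split hlt hle
      by_cases he0 : e = []
      · refine Or.inr (Or.inl ?_)
        rw [he0, List.nil_append] at hle2
        exact ⟨[], t, by rw [hy, ← hle2]; simp⟩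
      · by_cases he20 : e₂ = []
        · refine Or.inl ?_
          rw [he20, List.append_nil] at hle2
          exact ⟨s, [], by rw [hx, ← hle2, List.append_nil]⟩
        · exact Or.inr (Or.inr ⟨e, e₂, hle2, he0, he20, ⟨s, hx.symm⟩, ⟨t, hy.symm⟩⟩)
    · obtain ⟨e₂, he, ht⟩ := append_eq_append_split hlt.symm hle
      exact Or.inl ⟨s, e₂, by rw [hx, he, List.append_assoc]⟩
/-! ### Forbidden factors -/

lemma sig_head (w : List ℕ) : sig w = [] ∨ ∃ r, sig w = 0 :: r := by
  cases w with
  | nil => left; rfl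
  | cons a w =>
    right
    rw [sig_cons]
    by_cases ha : a = 0 <;> simp [fibMorph, ha]

lemma no11_sig (w : List ℕ) : ¬ [1, 1] <:+: sig w := by
  induction w with
  | nil => simp [sig_nil]
  | cons a w ih =>
    rw [sig_cons]
    intro h
    rcases infix_append_split h with h1 | h1 | ⟨l₁, l₂, he, hn1, hn2, hs, hp⟩
    · by_cases ha : a = 0
      · rw [show fibMorph a = [0, 1] by simp [fibMorph, ha]] at h1
        exact absurd h1 (by decide)
      · rw [show fibMorph a = [0] by simp [fibMorph, ha]] at h1
        have := h1.length_le
        simp at this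
    · exact ih h1
    · have hl : l₁.length + l₂.length = 2 := by
        have := congrArg List.length he; simpa using this.symm
      have hl1 : 1 ≤ l₁.length := Nat.one_le_iff_ne_zero.mpr
        (fun hh => hn1 (List.eq_nil_of_length_eq_zero hh))
      have hl2 : 1 ≤ l₂.length := Nat.one_le_iff_ne_zero.mpr
        (fun hh => hn2 (List.eq_nil_of_length_eq_zero hh))
      obtain ⟨b, rfl⟩ := List.length_eq_one_iff.mp (show l₂.length = 1 by omega)
      obtain ⟨a', rfl⟩ := List.length_eq_one_iff.mp (show l₁.length = 1 by omega)
      simp only [List.cons_append, List.nil_append, List.cons.injEq, and_true] at he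
      rcases sig_head w with h' | ⟨r, h'⟩ <;> rw [h'] at hp
      · exact absurd hp.length_le (by simp)
      · obtain ⟨t', ht'⟩ := hp
        rw [← he.2] at ht'
        simp at ht'

lemma no000_sig (w : List ℕ) (hb : ∀ c ∈ w, c = 0 ∨ c = 1) (hw : ¬ [1, 1] <:+: w) :
    ¬ [0, 0, 0] <:+: sig w := by
  induction w with
  | nil => simp [sig_nil]
  | cons a w ih =>
    rw [sig_cons]
    intro h
    have hbw : ∀ c ∈ w, c = 0 ∨ c = 1 := fun c hc => hb c (List.mem_cons_of_mem a hc)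
    have hww : ¬ [1, 1] <:+: w := fun h' => hw (h'.trans (List.infix_cons (List.infix_refl w)))
    rcases infix_append_split h with h1 | h1 | ⟨l₁, l₂, he, hn1, hn2, hs, hp⟩
    · have hlen := h1.length_le
      by_cases ha : a = 0 <;> simp [fibMorph, ha] at hlen
    · exact ih hbw hww h1
    · have hl : l₁.length + l₂.length = 3 := by
        have := congrArg List.length he; simpa using this.symm
      have hl1 : 1 ≤ l₁.length := Nat.one_le_iff_ne_zero.mpr
        (fun hh => hn1 (List.eq_nil_of_length_eq_zero hh))
      have hl2 : 1 ≤ l₂.length := Nat.one_le_iff_ne_zero.mpr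
        (fun hh => hn2 (List.eq_nil_of_length_eq_zero hh))
      have hsl : l₁.length ≤ 2 := by
        have := hs.length_le
        by_cases ha : a = 0 <;> simp [fibMorph, ha] at this <;> omega
      have hcase : l₁.length = 1 ∨ l₁.length = 2 := by omega
      rcases hcase with h' | h'
      · -- l₁ = [0], l₂ = [0, 0]
        obtain ⟨b, rfl⟩ := List.length_eq_one_iff.mp h'
        obtain ⟨c, d, rfl⟩ := List.length_eq_two.mp (show l₂.length = 2 by omega)
        simp only [List.cons_append, List.nil_append, List.cons.injEq, and_true] at he
        obtain ⟨hb1, hc1, hd1⟩ := he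
        rw [← hb1] at hs
        rw [← hc1, ← hd1] at hp
        have ha : a ≠ 0 := by
          intro ha0
          rw [show fibMorph a = [0, 1] by simp [fibMorph, ha0]] at hs
          exact absurd hs (by decide)
        have ha1 : a = 1 := by rcases hb a (by simp) with h'' | h'' <;> omega
        cases w with
        | nil => exact absurd hp.length_le (by simp [sig_nil])
        | cons b' w' =>
          by_cases hb' : b' = 0
          · rw [sig_cons, show fibMorph b' = [0, 1] by simp [fibMorph, hb']] at hp
            obtain ⟨t', ht'⟩ := hp
            simp at ht'
          · have hb1' : b' = 1 := by rcases hbw b' (by simp) with h'' | h'' <;> omega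
            exact hw ⟨[], w', by rw [ha1, hb1']; simp⟩
      · -- l₁ = [0, 0] suffix of fibMorph a : impossible
        obtain ⟨c, d, rfl⟩ := List.length_eq_two.mp h'
        obtain ⟨e, rfl⟩ := List.length_eq_one_iff.mp (show l₂.length = 1 by omega)
        simp only [List.cons_append, List.nil_append, List.cons.injEq, and_true] at he
        obtain ⟨hc1, hd1, _⟩ := he
        rw [← hc1, ← hd1] at hs
        by_cases ha : a = 0
        · rw [show fibMorph a = [0, 1] by simp [fibMorph, ha]] at hs
          exact absurd hs (by decide)
        · rw [show fibMorph a = [0] by simp [fibMorph, ha]] at hs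
          exact absurd hs.length_le (by simp)

lemma fibStr_binary (k : ℕ) : ∀ a ∈ fibStr k, a = 0 ∨ a = 1 := by
  induction k with
  | zero => decide
  | succ k ih =>
    intro a ha
    rw [fibStr_succ, sig] at ha
    obtain ⟨b, _, hb⟩ := List.mem_flatMap.mp ha
    by_cases hb0 : b = 0 <;> simp [fibMorph, hb0] at hb <;> omega

lemma no11_fibStr (k : ℕ) : ¬ [1, 1] <:+: fibStr k := by
  cases k with
  | zero => decide
  | succ k => rw [fibStr_succ]; exact no11_sig _

lemma no000_fibStr (k : ℕ) : ¬ [0, 0, 0] <:+: fibStr k := by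
  cases k with
  | zero => decide
  | succ k =>
    rw [fibStr_succ]
    exact no000_sig _ (fibStr_binary k) (no11_fibStr k)

lemma no11_fac : [1, 1] ∉ Fac fibWord := by
  intro h
  obtain ⟨k, hk⟩ := fac_iff_infix.mp h
  exact no11_fibStr k hk

lemma no000_fac : [0, 0, 0] ∉ Fac fibWord := by
  intro h
  obtain ⟨k, hk⟩ := fac_iff_infix.mp h
  exact no000_fibStr k hk

lemma sig_infix {u v : List ℕ} (h : u <:+: v) : sig u <:+: sig v := by
  obtain ⟨s, t, rfl⟩ := h
  exact ⟨sig s, sig t, by rw [← sig_append, ← sig_append]⟩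

lemma sig_fac {u : List ℕ} (hu : u ∈ Fac fibWord) : sig u ∈ Fac fibWord := by
  obtain ⟨k, hk⟩ := fac_iff_infix.mp hu
  exact fac_iff_infix.mpr ⟨k + 1, by rw [fibStr_succ]; exact sig_infix hk⟩
/-! ### Block structure of the Fibonacci word -/

/-- prefix of `fibWord` of length `j` -/
def fpre (j : ℕ) : List ℕ := (List.range j).map fibWord

lemma fpre_length (j : ℕ) : (fpre j).length = j := by simp [fpre]

lemma fpre_succ (j : ℕ) : fpre (j + 1) = fpre j ++ [fibWord j] := by
  simp [fpre, List.range_succ]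

lemma fpre_eq_take (j : ℕ) : fpre j = (fibStr (j + 2)).take j := by
  have hlen := lt_fibStr_length j
  apply List.ext_getElem (by simp [fpre_length, List.length_take]; omega)
  intro m h1 h2
  rw [fpre_length] at h1
  rw [List.getElem_take, fibStr_getElem_eq_fibWord _ _ (by omega)]
  simp only [fpre, List.getElem_map, List.getElem_range]

/-- block start positions -/
def B (j : ℕ) : ℕ := (sig (fpre j)).length

lemma B_zero : B 0 = 0 := rfl

lemma B_succ (j : ℕ) : B (j + 1) = B j + (fibMorph (fibWord j)).length := by
  rw [B, B, fpre_succ, sig_append, List.length_append]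
  congr 1
  simp [sig]

lemma sig_fpre_factorAt (j : ℕ) : FactorAt fibWord 0 (sig (fpre j)) := by
  have h1 : sig (fpre j) <+: fibStr (j + 3) := by
    rw [fpre_eq_take]
    have := List.take_append_drop j (fibStr (j + 2))
    have h2 : fibStr (j + 3) = sig ((fibStr (j + 2)).take j) ++
        sig ((fibStr (j + 2)).drop j) := by
      rw [← sig_append, this]
      rfl
    exact ⟨_, h2.symm⟩
  obtain ⟨t, ht⟩ := h1
  have := fibStr_factorAt (j + 3)
  rw [← ht, factorAt_append] at this
  exact this.1

lemma block_factorAt (j : ℕ) : FactorAt fibWord (B j) (fibMorph (fibWord j)) := by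
  have h := sig_fpre_factorAt (j + 1)
  rw [fpre_succ, sig_append, factorAt_append] at h
  have h2 := h.2
  rw [show sig [fibWord j] = fibMorph (fibWord j) by simp [sig]] at h2
  simpa [B] using h2

lemma fibWord_B (j : ℕ) : fibWord (B j) = 0 := by
  have h := block_factorAt j
  by_cases h0 : fibWord j = 0
  · rw [show fibMorph (fibWord j) = [0, 1] by simp [fibMorph, h0]] at h
    exact (factorAt_cons.mp h).1
  · rw [show fibMorph (fibWord j) = [0] by simp [fibMorph, h0]] at h
    exact (factorAt_cons.mp h).1

lemma B_next_zero (j : ℕ) (h0 : fibWord j = 0) :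
    B (j + 1) = B j + 2 ∧ fibWord (B j + 1) = 1 := by
  have h := block_factorAt j
  rw [show fibMorph (fibWord j) = [0, 1] by simp [fibMorph, h0]] at h
  rw [factorAt_cons, factorAt_cons] at h
  exact ⟨by rw [B_succ, h0]; rfl, h.2.1⟩

lemma B_next_one (j : ℕ) (h0 : fibWord j ≠ 0) : B (j + 1) = B j + 1 := by
  rw [B_succ]
  simp [fibMorph, h0]

lemma B_lt_succ (j : ℕ) : B j < B (j + 1) := by
  rw [B_succ]
  by_cases h0 : fibWord j = 0 <;> simp [fibMorph, h0]

lemma le_B (j : ℕ) : j ≤ B j := by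
  induction j with
  | zero => simp [B_zero]
  | succ j ih => have := B_lt_succ j; omega

lemma exists_block (i : ℕ) : ∃ j, B j ≤ i ∧ i < B (j + 1) := by
  induction i with
  | zero => exact ⟨0, by simp [B_zero], by have := B_lt_succ 0; omega⟩
  | succ i ih =>
    obtain ⟨j, h1, h2⟩ := ih
    rcases Nat.lt_or_ge (i + 1) (B (j + 1)) with h3 | h3
    · exact ⟨j, by omega, h3⟩
    · exact ⟨j + 1, by omega, by have := B_lt_succ (j + 1); omega⟩

lemma zero_is_block_start (i : ℕ) (h : fibWord i = 0) : ∃ j, B j = i := by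
  obtain ⟨j, h1, h2⟩ := exists_block i
  refine ⟨j, ?_⟩
  by_cases h0 : fibWord j = 0
  · obtain ⟨hB, hone⟩ := B_next_zero j h0
    rcases (show i = B j ∨ i = B j + 1 by omega) with h' | h'
    · omega
    · rw [h'] at h; rw [hone] at h; omega
  · have := B_next_one j h0
    omega

/-- The key decoding lemma: a block-aligned occurrence of `sig x ++ [0]` yields
an occurrence of `x`. -/
lemma decode (x : List ℕ) (hb : ∀ a ∈ x, a = 0 ∨ a = 1) :
    ∀ j, FactorAt fibWord (B j) (sig x ++ [0]) → FactorAt fibWord j x := by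
  induction x with
  | nil => intro j _; exact factorAt_nil _ _
  | cons a x' ih =>
    intro j h
    have hbx : ∀ a ∈ x', a = 0 ∨ a = 1 := fun c hc => hb c (List.mem_cons_of_mem a hc)
    rcases hb a (by simp) with ha | ha
    · -- a = 0, block [0,1]
      subst ha
      rw [sig_cons, show fibMorph 0 = [0, 1] by simp [fibMorph], List.append_assoc] at h
      rw [factorAt_append, factorAt_cons, factorAt_cons] at h
      obtain ⟨⟨_, h1, _⟩, h2⟩ := h
      have hj0 : fibWord j = 0 := by
        by_contra h0
        have hB := B_next_one j h0
        have := fibWord_B (j + 1)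
        rw [hB] at this
        rw [this] at h1
        exact absurd h1 (by decide)
      obtain ⟨hB, _⟩ := B_next_zero j hj0
      rw [factorAt_cons]
      refine ⟨hj0, ih hbx (j + 1) ?_⟩
      rw [hB]
      simpa using h2
    · -- a = 1, block [0]
      subst ha
      rw [sig_cons, show fibMorph 1 = [0] by simp [fibMorph], List.append_assoc] at h
      rw [factorAt_append, factorAt_cons] at h
      obtain ⟨⟨_, _⟩, h2⟩ := h
      have h2' : FactorAt fibWord (B j + 1) (sig x' ++ [0]) := by simpa using h2
      have hnext0 : fibWord (B j + 1) = 0 := by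
        have h4 := h2'
        rcases sig_head x' with h' | ⟨r, h'⟩ <;> rw [h'] at h4
        · rw [List.nil_append, factorAt_cons] at h4
          exact h4.1
        · rw [List.cons_append, factorAt_cons] at h4
          exact h4.1
      have hj1 : fibWord j ≠ 0 := by
        intro h0
        obtain ⟨_, hone⟩ := B_next_zero j h0
        rw [hone] at hnext0
        exact one_ne_zero hnext0
      have hj : fibWord j = 1 := by rcases fibWord_binary j with h' | h' <;> omega
      have hB := B_next_one j hj1
      rw [factorAt_cons]
      refine ⟨hj, ih hbx (j + 1) ?_⟩
      rw [hB]
      exact h2'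
  
lemma nil_fac : ([] : List ℕ) ∈ Fac fibWord := ⟨0, factorAt_nil _ _⟩

/-- Key desubstitution lemma. -/
lemma decode_fac {x : List ℕ} (hb : ∀ a ∈ x, a = 0 ∨ a = 1)
    (h : sig x ++ [0] ∈ Fac fibWord) : x ∈ Fac fibWord := by
  cases x with
  | nil => exact nil_fac
  | cons a x' =>
    obtain ⟨i, hi⟩ := h
    have hhead : fibWord i = 0 := by
      have h4 := hi
      rcases hb a (by simp) with ha | ha <;> subst ha
      · rw [sig_cons, show fibMorph 0 = [0, 1] by simp [fibMorph], List.append_assoc,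
          factorAt_append, factorAt_cons] at h4
        exact h4.1.1
      · rw [sig_cons, show fibMorph 1 = [0] by simp [fibMorph], List.append_assoc,
          factorAt_append, factorAt_cons] at h4
        exact h4.1.1
    obtain ⟨j, rfl⟩ := zero_is_block_start i hhead
    exact ⟨j, decode _ hb j hi⟩
/-! ### Rotations and existence of full rotation classes -/

lemma take_eq_take_of_prefix {l₁ l₂ : List α} (h : l₁ <+: l₂) {j : ℕ} (hj : j ≤ l₁.length) :
    l₂.take j = l₁.take j := by
  obtain ⟨r, rfl⟩ := h
  rw [List.take_append, show j - l₁.length = 0 by omega,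
    List.take_zero, List.append_nil]

lemma rotate_infix_doubled (l : List α) (s : ℕ) (hs : s ≤ l.length) :
    l.rotate s <:+: l ++ l := by
  rw [List.rotate_eq_drop_append_take hs]
  refine ⟨l.take s, l.drop s, ?_⟩
  have h := List.take_append_drop s l
  calc l.take s ++ (l.drop s ++ l.take s) ++ l.drop s
      = (l.take s ++ l.drop s) ++ (l.take s ++ l.drop s) := by simp only [List.append_assoc]
  _ = l ++ l := by rw [h]

lemma double_rotate_sq (l : List α) (s : ℕ) (hs : s ≤ l.length) :
    (l ++ l).rotate s = l.rotate s ++ l.rotate s := by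
  rw [List.rotate_eq_drop_append_take (by simp; omega),
    List.rotate_eq_drop_append_take hs,
    List.drop_append, List.take_append,
    show s - l.length = 0 by omega, List.drop_zero, List.take_zero, List.append_nil]
  have h := List.take_append_drop s l
  calc (l.drop s ++ l) ++ l.take s = l.drop s ++ (l ++ l.take s) := by
        simp only [List.append_assoc]
  _ = l.drop s ++ ((l.take s ++ l.drop s) ++ l.take s) := by rw [h]
  _ = (l.drop s ++ l.take s) ++ (l.drop s ++ l.take s) := by simp only [List.append_assoc]

lemma double_rotate_length_add (l : List α) (s : ℕ) :
    (l ++ l).rotate (l.length + s) = (l ++ l).rotate s := by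
  have h1 : (l ++ l).rotate l.length = l ++ l := by
    rw [List.rotate_eq_drop_append_take (by simp)]
    simp
  rw [← List.rotate_rotate, h1]

lemma double_rotate_mod (l : List α) (hl : l ≠ []) (n : ℕ) :
    (l ++ l).rotate n = (l ++ l).rotate (n % l.length) := by
  induction n using Nat.strong_induction_on with
  | _ n ih =>
    rcases Nat.lt_or_ge n l.length with h | h
    · rw [Nat.mod_eq_of_lt h]
    · have hpos : 0 < l.length := List.length_pos_iff.mpr hl
      obtain ⟨m, rfl⟩ : ∃ m, n = l.length + m := ⟨n - l.length, by omega⟩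
      rw [double_rotate_length_add, ih m (by omega), Nat.add_mod_left]

lemma double_fac (k : ℕ) : fibStr k ++ fibStr k ∈ Fac fibWord := by
  induction k with
  | zero => exact fac_iff_infix.mpr ⟨3, by decide⟩
  | succ k ih =>
    rw [fibStr_succ, ← sig_append]
    exact sig_fac ih

lemma X_fac (k : ℕ) : fibStr (k + 2) ++ fibStr (k + 2) ++ fibStr (k + 1) ++
    fibStr (k + 2) ++ fibStr (k + 2) ∈ Fac fibWord := by
  induction k with
  | zero => exact fac_iff_infix.mpr ⟨6, by decide⟩
  | succ k ih =>
    have h : fibStr (k + 3) ++ fibStr (k + 3) ++ fibStr (k + 2) ++ fibStr (k + 3) ++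
        fibStr (k + 3) = sig (fibStr (k + 2) ++ fibStr (k + 2) ++ fibStr (k + 1) ++
        fibStr (k + 2) ++ fibStr (k + 2)) := by
      simp only [sig_append, ← fibStr_succ]
    rw [h]
    exact sig_fac ih

lemma agree_take (k s : ℕ) (hs : s ≤ (fibStr (k + 2)).length) :
    (fibStr (k + 2)).take s = (fibStr (k + 1) ++ fibStr (k + 2)).take s := by
  have hrec : fibStr (k + 2) = fibStr (k + 1) ++ fibStr k := fibStr_add_two k
  rcases Nat.le_total s (fibStr (k + 1)).length with h1 | h1
  · rw [take_eq_take_of_prefix (fibStr_prefix (k + 1)) h1]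
    rw [List.take_append, show s - (fibStr (k + 1)).length = 0 by omega,
      List.take_zero, List.append_nil]
  · have hlen2 : (fibStr (k + 2)).length = (fibStr (k + 1)).length + (fibStr k).length := by
      rw [hrec, List.length_append]
    conv_lhs => rw [hrec]
    rw [List.take_append, List.take_of_length_le h1,
      List.take_append, List.take_of_length_le h1]
    congr 1
    have hk2 : fibStr k <+: fibStr (k + 2) :=
      (fibStr_prefix k).trans (fibStr_prefix (k + 1))
    rw [take_eq_take_of_prefix hk2 (by omega)]

lemma rot_sq_fac_core (k s : ℕ) (hs : s ≤ (fibStr (k + 2)).length) :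
    (fibStr (k + 2)).rotate s ++ (fibStr (k + 2)).rotate s ∈ Fac fibWord := by
  have h1 : (fibStr (k + 2)).take s ++ ((fibStr (k + 2)).rotate s ++ (fibStr (k + 2)).rotate s)
      = fibStr (k + 2) ++ fibStr (k + 2) ++ (fibStr (k + 2)).take s := by
    rw [List.rotate_eq_drop_append_take hs]
    have h := List.take_append_drop s (fibStr (k + 2))
    calc (fibStr (k + 2)).take s ++
        (((fibStr (k + 2)).drop s ++ (fibStr (k + 2)).take s) ++
          ((fibStr (k + 2)).drop s ++ (fibStr (k + 2)).take s))
        = ((fibStr (k + 2)).take s ++ (fibStr (k + 2)).drop s) ++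
          (((fibStr (k + 2)).take s ++ (fibStr (k + 2)).drop s) ++ (fibStr (k + 2)).take s) := by
          simp only [List.append_assoc]
    _ = fibStr (k + 2) ++ (fibStr (k + 2) ++ (fibStr (k + 2)).take s) := by rw [h]
    _ = fibStr (k + 2) ++ fibStr (k + 2) ++ (fibStr (k + 2)).take s := by
          simp only [List.append_assoc]
  have h2 : (fibStr (k + 1) ++ (fibStr (k + 2) ++ fibStr (k + 2))).take s
      = (fibStr (k + 2)).take s := by
    have e1 : (fibStr (k + 1) ++ (fibStr (k + 2) ++ fibStr (k + 2))).take s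
        = (fibStr (k + 1) ++ fibStr (k + 2)).take s := by
      rw [List.take_append,
        show List.take (s - (fibStr (k + 1)).length) (fibStr (k + 2) ++ fibStr (k + 2))
          = List.take (s - (fibStr (k + 1)).length) (fibStr (k + 2)) from
          take_eq_take_of_prefix ⟨fibStr (k + 2), rfl⟩ (by omega),
        ← List.take_append]
    rw [e1, ← agree_take k s hs]
  have hX := X_fac k
  refine fac_infix ⟨(fibStr (k + 2)).take s,
    (fibStr (k + 1) ++ (fibStr (k + 2) ++ fibStr (k + 2))).drop s, ?_⟩ hX
  rw [h1]
  have h3 := List.take_append_drop s (fibStr (k + 1) ++ (fibStr (k + 2) ++ fibStr (k + 2)))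
  rw [h2] at h3
  conv_rhs => rw [show fibStr (k + 2) ++ fibStr (k + 2) ++ fibStr (k + 1) ++ fibStr (k + 2) ++
    fibStr (k + 2) = fibStr (k + 2) ++ fibStr (k + 2) ++
    (fibStr (k + 1) ++ (fibStr (k + 2) ++ fibStr (k + 2))) by simp only [List.append_assoc],
    ← h3]
  simp only [List.append_assoc]

lemma rot_class_fac_t (k : ℕ) : ∀ v, (fibStr k).IsRotated v → v ∈ Fac fibWord := by
  rintro v ⟨n, rfl⟩
  rw [← List.rotate_mod]
  have hlt : n % (fibStr k).length < (fibStr k).length :=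
    Nat.mod_lt _ (List.length_pos_iff.mpr (fibStr_ne_nil k))
  exact fac_infix (rotate_infix_doubled _ _ (le_of_lt hlt)) (double_fac k)

lemma rot_class_fac_sq (k : ℕ) :
    ∀ v, (fibStr k ++ fibStr k).IsRotated v → v ∈ Fac fibWord := by
  rintro v ⟨n, rfl⟩
  rw [double_rotate_mod _ (fibStr_ne_nil k) n]
  set s := n % (fibStr k).length with hsdef
  have hs : s < (fibStr k).length := Nat.mod_lt _ (List.length_pos_iff.mpr (fibStr_ne_nil k))
  rw [double_rotate_sq _ _ (le_of_lt hs)]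
  match k, hs with
  | 0, hs =>
    have h0 : s = 0 := by
      have : (fibStr 0).length = 1 := rfl
      omega
    rw [h0, List.rotate_zero]
    exact double_fac 0
  | 1, hs =>
    have h0 : s = 0 ∨ s = 1 := by
      have : (fibStr 1).length = 2 := rfl
      omega
    rcases h0 with h0 | h0 <;> rw [h0]
    · rw [List.rotate_zero]
      exact double_fac 1
    · exact fac_iff_infix.mpr ⟨4, by decide⟩
  | (k + 2), hs => exact rot_sq_fac_core k s (le_of_lt hs)
/-! ### Desubstitution -/

def dec : List ℕ → List ℕ
  | [] => []
  | 0 :: 1 :: r => 0 :: dec r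
  | 0 :: r => 1 :: dec r
  | _ :: r => dec r

lemma dec_eq_one (r : List ℕ) (hr : ∀ r', r ≠ 1 :: r') : dec (0 :: r) = 1 :: dec r := by
  cases r with
  | nil => simp [dec]
  | cons b r' =>
    have hb : b ≠ 1 := fun h => hr r' (by rw [h])
    simp [dec, hb]

lemma dec_eq_skip (a : ℕ) (r : List ℕ) (ha : a ≠ 0) : dec (a :: r) = dec r := by
  cases r with
  | nil =>
    rcases a with _ | a
    · omega
    · simp [dec]
  | cons b r' =>
    rcases a with _ | a
    · omega
    · simp [dec]

lemma dec_binary (v : List ℕ) : ∀ a ∈ dec v, a = 0 ∨ a = 1 := by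
  induction v using dec.induct with
  | case1 => simp [dec]
  | case2 r ih =>
    intro x hx
    rw [show dec (0 :: 1 :: r) = 0 :: dec r by simp [dec]] at hx
    rcases List.mem_cons.mp hx with h | h
    · left; exact h
    · exact ih x h
  | case3 r hr1 ih =>
    intro x hx
    rw [dec_eq_one r (fun r' h => hr1 r' h)] at hx
    rcases List.mem_cons.mp hx with h | h
    · right; exact h
    · exact ih x h
  | case4 a r h1 h2 ih =>
    intro x hx
    rw [dec_eq_skip a r (fun h => h2 h)] at hx
    exact ih x hx

lemma sig_dec (v : List ℕ) (hb : ∀ a ∈ v, a = 0 ∨ a = 1) (h11 : ¬ [1, 1] <:+: v)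
    (hh : v = [] ∨ ∃ r, v = 0 :: r) : sig (dec v) = v := by
  induction v using dec.induct with
  | case1 => rfl
  | case2 r ih =>
    have hbr : ∀ x ∈ r, x = 0 ∨ x = 1 := fun x hx => hb x (by simp [hx])
    have h11r : ¬ [1, 1] <:+: r := fun h => h11 (h.trans ⟨[0, 1], [], by simp⟩)
    have hhr : r = [] ∨ ∃ r', r = 0 :: r' := by
      cases r with
      | nil => left; rfl
      | cons c r' =>
        right
        rcases hbr c (by simp) with h | h
        · exact ⟨r', by rw [h]⟩
        · exact absurd ⟨[0], r', by rw [h]; simp⟩ h11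
    rw [show dec (0 :: 1 :: r) = 0 :: dec r by simp [dec], sig_cons, ih hbr h11r hhr]
    rfl
  | case3 r hr1 ih =>
    have hbr : ∀ x ∈ r, x = 0 ∨ x = 1 := fun x hx => hb x (by simp [hx])
    have h11r : ¬ [1, 1] <:+: r := fun h => h11 (h.trans ⟨[0], [], by simp⟩)
    have hhr : r = [] ∨ ∃ r', r = 0 :: r' := by
      cases r with
      | nil => left; rfl
      | cons c r' =>
        right
        rcases hbr c (by simp) with h | h
        · exact ⟨r', by rw [h]⟩
        · exact absurd (hr1 r' (by rw [h])) (by simp)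
    rw [dec_eq_one r (fun r' h => hr1 r' h), sig_cons, ih hbr h11r hhr]
    rfl
  | case4 a r h1 h2 ih =>
    rcases hh with h | ⟨r', hr⟩
    · simp at h
    · simp at hr
      exact absurd hr.1 (fun h => h2 h)

lemma sig_length_ge (x : List ℕ) : x.length ≤ (sig x).length := by
  induction x with
  | nil => simp [sig_nil]
  | cons a r ih =>
    rw [sig_cons, List.length_append, List.length_cons]
    by_cases ha : a = 0 <;> simp [fibMorph, ha] <;> omega

lemma sig_length_gt (x : List ℕ) (h : 0 ∈ x) : x.length < (sig x).length := by
  induction x with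
  | nil => simp at h
  | cons a r ih =>
    rw [sig_cons, List.length_append, List.length_cons]
    by_cases ha : a = 0
    · have := sig_length_ge r
      simp [fibMorph, ha]
      omega
    · have h0r : 0 ∈ r := by
        rcases List.mem_cons.mp h with h' | h'
        · exact absurd h'.symm ha
        · exact h'
      have := ih h0r
      simp [fibMorph, ha]
      omega

lemma sig_rotate (w : List ℕ) (s : ℕ) (hs : s ≤ w.length) :
    sig (w.rotate s) = (sig w).rotate ((sig (w.take s)).length) := by
  have hw : sig w = sig (w.take s) ++ sig (w.drop s) := by
    rw [← sig_append, List.take_append_drop]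
  rw [List.rotate_eq_drop_append_take hs, sig_append]
  rw [List.rotate_eq_drop_append_take (by rw [hw, List.length_append]; omega)]
  rw [hw, List.drop_left, List.take_left]

lemma sig_isRotated {w w' : List ℕ} (h : w.IsRotated w') : (sig w).IsRotated (sig w') := by
  obtain ⟨n, rfl⟩ := h
  cases w with
  | nil => rw [List.rotate_nil]
  | cons a r =>
    rw [← List.rotate_mod]
    have hlt : n % (a :: r).length ≤ (a :: r).length :=
      le_of_lt (Nat.mod_lt _ (by simp))
    rw [sig_rotate _ _ hlt]
    exact ⟨_, rfl⟩

lemma fibWord_zero : fibWord 0 = 0 := rfl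

/-- The descent lemma. -/
lemma descent {u : List ℕ} (h3 : 3 ≤ u.length)
    (hall : ∀ v, u.IsRotated v → v ∈ Fac fibWord) :
    ∃ w : List ℕ, 1 ≤ w.length ∧ w.length < u.length ∧
      (∀ v, w.IsRotated v → v ∈ Fac fibWord) ∧ u.IsRotated (sig w) := by
  have hufac : u ∈ Fac fibWord := hall u (List.IsRotated.refl u)
  have hub : ∀ a ∈ u, a = 0 ∨ a = 1 := fac_binary hufac
  have h1u : 1 ∈ u := by
    by_contra h1
    have hall0 : ∀ a ∈ u, a = 0 := by
      intro a ha
      rcases hub a ha with h | h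
      · exact h
      · exact absurd (h ▸ ha) h1
    have hrep : u = List.replicate u.length 0 := List.eq_replicate_of_mem hall0
    have h000 : [0, 0, 0] <:+: u := by
      rw [hrep]
      refine ⟨[], List.replicate (u.length - 3) 0, ?_⟩
      rw [List.nil_append, show ([0,0,0] : List ℕ) = List.replicate 3 0 from rfl,
        ← List.replicate_add]
      congr 1
      omega
    exact no000_fac (fac_infix h000 hufac)
  obtain ⟨p, q, hu⟩ := List.append_of_mem h1u
  have hlenu : u.length = p.length + q.length + 1 := by rw [hu]; simp; omega
  have hr1 : u.rotate p.length = 1 :: (q ++ p) := by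
    rw [hu, List.rotate_eq_drop_append_take (by simp), List.drop_left, List.take_left]
    simp
  have hu_r1 : u.IsRotated (1 :: (q ++ p)) := ⟨p.length, hr1⟩
  have hr1fac : (1 :: (q ++ p)) ∈ Fac fibWord := hall _ hu_r1
  obtain ⟨z₀, z', hz⟩ : ∃ z₀ z', q ++ p = z₀ :: z' := by
    cases hqz : q ++ p with
    | nil =>
      exfalso
      have hL := congrArg List.length hqz
      rw [List.length_append] at hL
      simp only [List.length_nil] at hL
      omega
    | cons z₀ z' => exact ⟨z₀, z', rfl⟩
  rw [hz] at hu_r1 hr1fac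
  have hz₀ : z₀ = 0 := by
    rcases fac_binary hr1fac z₀ (by simp) with h | h
    · exact h
    · exact absurd (fac_infix ⟨[], z', by rw [h]; simp⟩ hr1fac) no11_fac
  subst hz₀
  -- the canonical rotation u' = (0 :: z') ++ [1]
  have hu'rot : (1 :: 0 :: z').rotate 1 = (0 :: z') ++ [1] := by
    rw [List.rotate_eq_drop_append_take (by simp)]
    simp
  have hu_u' : u.IsRotated ((0 :: z') ++ [1]) := hu_r1.trans ⟨1, hu'rot⟩
  have hall' : ∀ v', ((0 :: z') ++ [1]).IsRotated v' → v' ∈ Fac fibWord :=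
    fun v' hv => hall _ (hu_u'.trans hv)
  have hu'fac : (0 :: z') ++ [1] ∈ Fac fibWord := hall' _ (List.IsRotated.refl _)
  have hu'b := fac_binary hu'fac
  have h11u' : ¬ [1, 1] <:+: ((0 :: z') ++ [1]) := fun h => no11_fac (fac_infix h hu'fac)
  set w := dec ((0 :: z') ++ [1]) with hwdef
  have hsigw : sig w = (0 :: z') ++ [1] :=
    sig_dec _ hu'b h11u' (Or.inr ⟨z' ++ [1], by simp⟩)
  have hwb : ∀ a ∈ w, a = 0 ∨ a = 1 := dec_binary _
  have hlen_eq : ((0 :: z') ++ [1]).length = u.length := hu_u'.perm.length_eq.symm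
  have h1sig : (1 : ℕ) ∈ sig w := by rw [hsigw]; simp
  have h0w : (0 : ℕ) ∈ w := by
    by_contra h0
    have : ∀ c ∈ sig w, c = 0 := by
      intro c hc
      obtain ⟨a, haw, hca⟩ := List.mem_flatMap.mp hc
      have ha0 : a ≠ 0 := fun h => h0 (h ▸ haw)
      rw [show fibMorph a = [0] by simp [fibMorph, ha0]] at hca
      simpa using hca
    have := this 1 h1sig
    omega
  have hlen_lt : w.length < u.length := by
    have := sig_length_gt w h0w
    rw [hsigw, hlen_eq] at this
    omega
  have hlen1 : 1 ≤ w.length := by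
    rcases Nat.eq_zero_or_pos w.length with h | h
    · exfalso
      have hwnil : w = [] := List.eq_nil_of_length_eq_zero h
      rw [hwnil] at hsigw
      have := congrArg List.length hsigw
      simp [sig_nil] at this
    · omega
  have hu_sigw : u.IsRotated (sig w) := by rw [hsigw]; exact hu_u'
  refine ⟨w, hlen1, hlen_lt, ?_, hu_sigw⟩
  -- every rotation of w is a factor
  have hsig_rot : ∀ y, w.IsRotated y → sig y ∈ Fac fibWord :=
    fun y hy => hall _ (hu_sigw.trans (sig_isRotated hy))
  intro v hv
  obtain ⟨m, rfl⟩ := hv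
  rw [← List.rotate_mod]
  have hs : m % w.length < w.length := Nat.mod_lt _ (by omega)
  set s := m % w.length with hsdef
  set x := w.rotate s with hxdef
  have hx_rot : w.IsRotated x := ⟨s, rfl⟩
  have hxb : ∀ a ∈ x, a = 0 ∨ a = 1 := fun a ha => hwb a (hx_rot.perm.symm.subset ha)
  have hx_len : x.length = w.length := List.length_rotate w s
  have hx_ne : x ≠ [] := by
    intro h
    rw [h] at hx_len
    simp at hx_len
    omega
  have h0x : (0 : ℕ) ∈ x := hx_rot.perm.subset h0w
  rcases List.eq_nil_or_concat x with h | ⟨ys, b, hxc⟩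
  · exact absurd h hx_ne
  rw [List.concat_eq_append] at hxc
  rcases hxb b (by rw [hxc]; simp) with hb0 | hb1
  · -- x ends with 0 : σx ends with 1, the next letter must be 0
    subst hb0
    have hsigx : sig x = sig ys ++ [0, 1] := by
      rw [hxc, sig_append]
      rfl
    obtain ⟨c, ⟨m', hc⟩, hfacext⟩ := fac_extend (hsig_rot x hx_rot)
    have hc_bin : c = 0 ∨ c = 1 := hc ▸ fibWord_binary m'
    rcases hc_bin with hc0 | hc1
    · subst hc0
      exact decode_fac hxb hfacext
    · exfalso
      subst hc1
      have : [1, 1] <:+: sig x ++ [1] := by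
        rw [hsigx]
        exact ⟨sig ys ++ [0], [], by simp⟩
      exact no11_fac (fac_infix this hfacext)
  · -- x ends with 1
    subst hb1
    obtain ⟨c₀, ys₂, hys⟩ : ∃ c₀ ys₂, ys = c₀ :: ys₂ := by
      cases hys : ys with
      | nil =>
        exfalso
        rw [hys] at hxc
        rw [hxc] at h0x
        simp at h0x
      | cons c₀ ys₂ => exact ⟨c₀, ys₂, rfl⟩
    rw [hys] at hxc
    have hc₀ : c₀ = 0 := by
      rcases hxb c₀ (by rw [hxc]; simp) with h | h
      · exact h
      · -- c₀ = 1 : rotate to get 1 1 at the start, contradiction with no 000 after σ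
        exfalso
        subst h
        have hyrot : x.rotate (x.length - 1) = 1 :: 1 :: ys₂ := by
          have hxc' : x = (1 :: ys₂) ++ [1] := hxc
          rw [hxc']
          have hL : ((1 :: ys₂) ++ [1]).length - 1 = (1 :: ys₂).length := by simp
          rw [hL, List.rotate_eq_drop_append_take (by simp), List.drop_left, List.take_left]
          rfl
        have hy_rot : w.IsRotated (1 :: 1 :: ys₂) := hx_rot.trans ⟨x.length - 1, hyrot⟩
        have hsigy := hsig_rot _ hy_rot
        have hys₂ne : ys₂ ≠ [] := by
          intro h
          have h0y : (0 : ℕ) ∈ 1 :: 1 :: ys₂ := hy_rot.perm.subset h0w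
          rw [h] at h0y
          simp at h0y
        obtain ⟨rr, hrr⟩ : ∃ rr, sig ys₂ = 0 :: rr := by
          rcases sig_head ys₂ with h | h
          · exfalso
            have h1 := sig_length_ge ys₂
            rw [h] at h1
            simp at h1
            exact hys₂ne h1
          · exact h
        have : sig (1 :: 1 :: ys₂) = 0 :: 0 :: 0 :: rr := by
          rw [sig_cons, sig_cons, hrr]
          rfl
        rw [this] at hsigy
        exact no000_fac (fac_infix ⟨[], rr, by simp⟩ hsigy)
    subst hc₀
    -- x = 0 :: (ys₂ ++ [1])
    have hxeq : x = 0 :: (ys₂ ++ [1]) := by rw [hxc]; simp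
    have hsigx : sig x = 0 :: 1 :: sig (ys₂ ++ [1]) := by
      rw [hxeq, sig_cons]
      rfl
    have hW : (sig x).rotate 1 = (1 :: sig (ys₂ ++ [1])) ++ [0] := by
      rw [hsigx, List.rotate_eq_drop_append_take (by simp)]
      rfl
    have hu_sigx : u.IsRotated (sig x) := hu_sigw.trans (sig_isRotated hx_rot)
    have hWfac : (1 :: sig (ys₂ ++ [1])) ++ [0] ∈ Fac fibWord := by
      rw [← hW]
      exact hall _ (hu_sigx.trans ⟨1, rfl⟩)
    obtain ⟨i, hi⟩ := hWfac
    rw [show (1 :: sig (ys₂ ++ [1])) ++ [0] = 1 :: (sig (ys₂ ++ [1]) ++ [0]) by simp,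
      factorAt_cons] at hi
    obtain ⟨hi1, hi2⟩ := hi
    rcases i with _ | i'
    · exact absurd hi1 (by rw [fibWord_zero]; decide)
    have hprev : fibWord i' = 0 := by
      rcases fibWord_binary i' with h | h
      · exact h
      · exfalso
        apply no11_fac
        refine ⟨i', ?_⟩
        rw [factorAt_cons, factorAt_cons]
        exact ⟨h, hi1, factorAt_nil _ _⟩
    have hfull : FactorAt fibWord i' (sig x ++ [0]) := by
      rw [hsigx, show (0 :: 1 :: sig (ys₂ ++ [1])) ++ [0]
        = 0 :: (1 :: (sig (ys₂ ++ [1]) ++ [0])) by simp, factorAt_cons]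
      exact ⟨hprev, by rw [factorAt_cons]; exact ⟨by simpa using hi1, by simpa using hi2⟩⟩
    exact decode_fac hxb ⟨i', hfull⟩

/-- Classification of words all of whose rotations are factors. -/
lemma classify : ∀ (n : ℕ) (u : List ℕ), u.length = n → 1 ≤ n →
    (∀ v, u.IsRotated v → v ∈ Fac fibWord) →
    u.IsRotated [1] ∨ (∃ k, u.IsRotated (fibStr k)) ∨
      (∃ k, u.IsRotated (fibStr k ++ fibStr k)) := by
  intro n
  induction n using Nat.strong_induction_on with
  | _ n ih =>
    intro u hlen h1 hall
    rcases Nat.lt_or_ge n 3 with hn3 | hn3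
    · -- n = 1 or 2 : direct analysis
      have hub : ∀ a ∈ u, a = 0 ∨ a = 1 := fac_binary (hall u (List.IsRotated.refl u))
      rcases (show n = 1 ∨ n = 2 by omega) with h | h
      · subst h
        obtain ⟨a, rfl⟩ := List.length_eq_one_iff.mp hlen
        rcases hub a (by simp) with h | h <;> subst h
        · exact Or.inr (Or.inl ⟨0, List.IsRotated.refl _⟩)
        · exact Or.inl (List.IsRotated.refl _)
      · subst h
        obtain ⟨a, b, rfl⟩ := List.length_eq_two.mp hlen
        rcases hub a (by simp) with ha | ha <;> rcases hub b (by simp) with hb | hb <;>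
          subst ha <;> subst hb
        · exact Or.inr (Or.inr ⟨0, List.IsRotated.refl _⟩)
        · exact Or.inr (Or.inl ⟨1, List.IsRotated.refl _⟩)
        · exact Or.inr (Or.inl ⟨1, ⟨1, by decide⟩⟩)
        · exact absurd (hall _ (List.IsRotated.refl _)) no11_fac
    · obtain ⟨w, hw1, hwlt, hwall, hwrot⟩ := descent (hlen ▸ hn3) hall
      rcases ih w.length (by omega) w rfl hw1 hwall with h | ⟨k, h⟩ | ⟨k, h⟩
      · exfalso
        have : u.length = ([0] : List ℕ).length := by
          have h2 : u.IsRotated (sig [1]) := hwrot.trans (sig_isRotated h)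
          exact h2.perm.length_eq
        simp at this
        omega
      · exact Or.inr (Or.inl ⟨k + 1, by
          rw [fibStr_succ]
          exact hwrot.trans (sig_isRotated h)⟩)
      · refine Or.inr (Or.inr ⟨k + 1, ?_⟩)
        have h2 := hwrot.trans (sig_isRotated h)
        rw [sig_append, ← fibStr_succ] at h2
        exact h2
/-! ### Fibonacci number facts -/

lemma fib_lt_fib {i j : ℕ} (hi : 2 ≤ i) (hij : i < j) : Nat.fib i < Nat.fib j :=
  lt_of_lt_of_le (Nat.fib_lt_fib_succ hi) (Nat.fib_mono hij)

lemma fib_inj {i j : ℕ} (hi : 2 ≤ i) (hj : 2 ≤ j) (h : Nat.fib i = Nat.fib j) : i = j := by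
  rcases Nat.lt_trichotomy i j with h' | h' | h'
  · exact absurd h (Nat.ne_of_lt (fib_lt_fib hi h'))
  · exact h'
  · exact absurd h.symm (Nat.ne_of_lt (fib_lt_fib hj h'))

lemma two_fib_not_fib {j k : ℕ} (hj : 3 ≤ j) (h : 2 * Nat.fib j = Nat.fib k) : False := by
  obtain ⟨m, rfl⟩ : ∃ m, j = m + 3 := ⟨j - 3, by omega⟩
  have h1 : Nat.fib (m + 2) < Nat.fib (m + 3) := fib_lt_fib (by omega) (by omega)
  have h2 : Nat.fib (m + 3) < Nat.fib (m + 4) := fib_lt_fib (by omega) (by omega)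
  have h3 : Nat.fib (m + 4) = Nat.fib (m + 2) + Nat.fib (m + 3) := Nat.fib_add_two
  have h4 : Nat.fib (m + 5) = Nat.fib (m + 3) + Nat.fib (m + 4) := Nat.fib_add_two
  -- fib (m+4) < 2 fib (m+3) < fib (m+5)
  rcases Nat.lt_trichotomy k (m + 4) with hk | hk | hk
  · have : Nat.fib k ≤ Nat.fib (m + 4) := Nat.fib_mono (by omega)
    omega
  · subst hk
    omega
  · have : Nat.fib (m + 5) ≤ Nat.fib k := Nat.fib_mono (by omega)
    omega

lemma fib_identity {k : ℕ} (hk : 4 ≤ k) :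
    Nat.fib k + Nat.fib (k - 3) = 2 * Nat.fib (k - 1) := by
  obtain ⟨m, rfl⟩ : ∃ m, k = m + 4 := ⟨k - 4, by omega⟩
  have e1 : m + 4 - 3 = m + 1 := by omega
  have e2 : m + 4 - 1 = m + 3 := by omega
  rw [e1, e2]
  have h3 : Nat.fib (m + 4) = Nat.fib (m + 2) + Nat.fib (m + 3) := Nat.fib_add_two
  have h4 : Nat.fib (m + 3) = Nat.fib (m + 1) + Nat.fib (m + 2) := Nat.fib_add_two
  omega

lemma fib_ge_three {k : ℕ} (hk : 4 ≤ k) : 3 ≤ Nat.fib k := by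
  have : Nat.fib 4 ≤ Nat.fib k := Nat.fib_mono hk
  have h4 : Nat.fib 4 = 3 := rfl
  omega

/-! ### Quotient helpers -/

lemma quot_eq_iff (u v : List ℕ) :
    (Quotient.mk (List.IsRotated.setoid ℕ) u = Quotient.mk _ v) ↔ u.IsRotated v := by
  rw [Quotient.eq]
  exact Iff.rfl

lemma rot_one : ∀ v : List ℕ, [1].IsRotated v → v ∈ Fac fibWord := by
  rintro v ⟨n, rfl⟩
  rw [List.rotate_singleton]
  exact fac_iff_infix.mpr ⟨1, by decide⟩

/-! ### The sets of rotation classes -/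

lemma S_zero :
    {q : Quotient (List.IsRotated.setoid ℕ) | ∃ u : List ℕ, Quotient.mk _ u = q ∧
      u.length = 0 ∧ ∀ v, u.IsRotated v → v ∈ Fac fibWord}
    = {Quotient.mk _ ([] : List ℕ)} := by
  ext q
  simp only [Set.mem_setOf_eq, Set.mem_singleton_iff]
  constructor
  · rintro ⟨u, rfl, hlen, _⟩
    rw [List.eq_nil_of_length_eq_zero hlen]
  · rintro rfl
    refine ⟨[], rfl, rfl, ?_⟩
    rintro v ⟨n, rfl⟩
    rw [List.rotate_nil]
    exact nil_fac

lemma S_fib (k : ℕ) (hk : 4 ≤ k) :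
    {q : Quotient (List.IsRotated.setoid ℕ) | ∃ u : List ℕ, Quotient.mk _ u = q ∧
      u.length = Nat.fib k ∧ ∀ v, u.IsRotated v → v ∈ Fac fibWord}
    = {Quotient.mk _ (fibStr (k - 2))} := by
  have hlen_t : (fibStr (k - 2)).length = Nat.fib k := by
    rw [fibStr_length, show k - 2 + 2 = k by omega]
  have h3 : 3 ≤ Nat.fib k := fib_ge_three hk
  ext q
  simp only [Set.mem_setOf_eq, Set.mem_singleton_iff]
  constructor
  · rintro ⟨u, rfl, hlen, hprop⟩
    rcases classify u.length u rfl (by omega) hprop with h | ⟨j, h⟩ | ⟨j, h⟩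
    · have hl1 : u.length = 1 := by simpa using h.perm.length_eq
      omega
    · have hl := h.perm.length_eq
      rw [fibStr_length, hlen] at hl
      have : k = j + 2 := fib_inj (by omega) (by omega) hl
      rw [quot_eq_iff, show k - 2 = j by omega]
      exact h
    · exfalso
      have hl := h.perm.length_eq
      rw [List.length_append, fibStr_length, hlen] at hl
      exact two_fib_not_fib (j := j + 2) (k := k) (by
        -- fib (j+2) ≥ 2 would need j ≥ 1; if j = 0 then fib k = 2, contradiction
        rcases Nat.lt_or_ge j 1 with hj | hj
        · interval_cases j
          · have hfib2 : Nat.fib (0 + 2) = 1 := rfl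
            omega
        · omega) (by omega)
  · rintro rfl
    exact ⟨fibStr (k - 2), rfl, hlen_t, rot_class_fac_t (k - 2)⟩

lemma S_two_fib (k : ℕ) (hk : 4 ≤ k) :
    {q : Quotient (List.IsRotated.setoid ℕ) | ∃ u : List ℕ, Quotient.mk _ u = q ∧
      u.length = 2 * Nat.fib (k - 1) ∧ ∀ v, u.IsRotated v → v ∈ Fac fibWord}
    = {Quotient.mk _ (fibStr (k - 3) ++ fibStr (k - 3))} := by
  have hlen_t : (fibStr (k - 3) ++ fibStr (k - 3)).length = 2 * Nat.fib (k - 1) := by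
    rw [List.length_append, fibStr_length, show k - 3 + 2 = k - 1 by omega]
    omega
  have h2 : 2 ≤ Nat.fib (k - 1) := by
    have : Nat.fib 3 ≤ Nat.fib (k - 1) := Nat.fib_mono (by omega)
    have h3 : Nat.fib 3 = 2 := rfl
    omega
  ext q
  simp only [Set.mem_setOf_eq, Set.mem_singleton_iff]
  constructor
  · rintro ⟨u, rfl, hlen, hprop⟩
    rcases classify u.length u rfl (by omega) hprop with h | ⟨j, h⟩ | ⟨j, h⟩
    · have hl1 : u.length = 1 := by simpa using h.perm.length_eq
      omega
    · exfalso
      have hl := h.perm.length_eq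
      rw [fibStr_length, hlen] at hl
      exact two_fib_not_fib (j := k - 1) (k := j + 2) (by omega) hl
    · have hl := h.perm.length_eq
      rw [List.length_append, fibStr_length, hlen] at hl
      have : j + 2 = k - 1 := fib_inj (by omega) (by omega) (by omega)
      rw [quot_eq_iff, show k - 3 = j by omega]
      exact h
  · rintro rfl
    exact ⟨_, rfl, hlen_t, rot_class_fac_sq (k - 3)⟩

lemma S_one :
    {q : Quotient (List.IsRotated.setoid ℕ) | ∃ u : List ℕ, Quotient.mk _ u = q ∧
      u.length = 1 ∧ ∀ v, u.IsRotated v → v ∈ Fac fibWord}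
    = {Quotient.mk _ ([0] : List ℕ), Quotient.mk _ ([1] : List ℕ)} := by
  ext q
  simp only [Set.mem_setOf_eq, Set.mem_insert_iff, Set.mem_singleton_iff]
  constructor
  · rintro ⟨u, rfl, hlen, hprop⟩
    rcases classify u.length u rfl (by omega) hprop with h | ⟨j, h⟩ | ⟨j, h⟩
    · right; rw [quot_eq_iff]; exact h
    · left
      have hl := h.perm.length_eq
      rw [fibStr_length, hlen] at hl
      have : 2 = j + 2 := fib_inj (by omega) (by omega) hl
      have hj : j = 0 := by omega
      rw [quot_eq_iff]
      rw [hj] at h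
      exact h
    · exfalso
      have hl := h.perm.length_eq
      rw [List.length_append, fibStr_length, hlen] at hl
      have : 1 ≤ Nat.fib (j + 2) := Nat.fib_pos.mpr (by omega)
      omega
  · rintro (rfl | rfl)
    · exact ⟨[0], rfl, rfl, rot_class_fac_t 0⟩
    · exact ⟨[1], rfl, rfl, rot_one⟩

lemma S_two :
    {q : Quotient (List.IsRotated.setoid ℕ) | ∃ u : List ℕ, Quotient.mk _ u = q ∧
      u.length = 2 ∧ ∀ v, u.IsRotated v → v ∈ Fac fibWord}
    = {Quotient.mk _ ([0, 1] : List ℕ), Quotient.mk _ ([0, 0] : List ℕ)} := by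
  ext q
  simp only [Set.mem_setOf_eq, Set.mem_insert_iff, Set.mem_singleton_iff]
  constructor
  · rintro ⟨u, rfl, hlen, hprop⟩
    rcases classify u.length u rfl (by omega) hprop with h | ⟨j, h⟩ | ⟨j, h⟩
    · exfalso
      have hl1 : u.length = 1 := by simpa using h.perm.length_eq
      omega
    · left
      have hl := h.perm.length_eq
      rw [fibStr_length, hlen] at hl
      have : 3 = j + 2 := fib_inj (by omega) (by omega) hl
      have hj : j = 1 := by omega
      rw [quot_eq_iff]
      rw [hj] at h
      exact h
    · right
      have hl := h.perm.length_eq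
      rw [List.length_append, fibStr_length, hlen] at hl
      have h1 : Nat.fib (j + 2) = 1 := by omega
      have : j + 2 = 2 := fib_inj (by omega) (by omega) (by rw [h1]; rfl)
      have hj : j = 0 := by omega
      rw [quot_eq_iff]
      rw [hj] at h
      exact h
  · rintro (rfl | rfl)
    · exact ⟨[0, 1], rfl, rfl, rot_class_fac_t 1⟩
    · exact ⟨[0, 0], rfl, rfl, rot_class_fac_sq 0⟩

lemma S_empty (n : ℕ) (h3 : 3 ≤ n) (hfib : ¬ ∃ k, 4 ≤ k ∧ n = Nat.fib k)
    (hfib2 : ¬ ∃ k, 4 ≤ k ∧ n = Nat.fib k + Nat.fib (k - 3)) :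
    {q : Quotient (List.IsRotated.setoid ℕ) | ∃ u : List ℕ, Quotient.mk _ u = q ∧
      u.length = n ∧ ∀ v, u.IsRotated v → v ∈ Fac fibWord} = ∅ := by
  ext q
  simp only [Set.mem_setOf_eq, Set.mem_empty_iff_false, iff_false]
  rintro ⟨u, rfl, hlen, hprop⟩
  rcases classify u.length u rfl (by omega) hprop with h | ⟨j, h⟩ | ⟨j, h⟩
  · have hl1 : u.length = 1 := by simpa using h.perm.length_eq
    omega
  · have hl := h.perm.length_eq
    rw [fibStr_length, hlen] at hl
    have hj : 2 ≤ j := by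
      by_contra hj
      have hf2 : Nat.fib 2 = 1 := rfl
      have hf3 : Nat.fib 3 = 2 := rfl
      interval_cases j
      · rw [show (0:ℕ) + 2 = 2 from rfl, hf2] at hl
        omega
      · rw [show (1:ℕ) + 2 = 3 from rfl, hf3] at hl
        omega
    exact hfib ⟨j + 2, by omega, hl⟩
  · have hl := h.perm.length_eq
    rw [List.length_append, fibStr_length, hlen] at hl
    have hj : 1 ≤ j := by
      by_contra hj
      have hf2 : Nat.fib 2 = 1 := rfl
      interval_cases j
      rw [show (0:ℕ) + 2 = 2 from rfl, hf2] at hl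
      omega
    refine hfib2 ⟨j + 3, by omega, ?_⟩
    have hid := fib_identity (k := j + 3) (by omega)
    rw [show j + 3 - 1 = j + 2 by omega] at hid
    omega

/-! ### Distinctness of classes -/

lemma ne_class_01 :
    Quotient.mk (List.IsRotated.setoid ℕ) [0] ≠ Quotient.mk _ [1] := by
  rw [Ne, quot_eq_iff]
  intro h
  have := h.perm.subset (show (0:ℕ) ∈ [0] by simp)
  simp at this

lemma ne_class_two :
    Quotient.mk (List.IsRotated.setoid ℕ) [0, 1] ≠ Quotient.mk _ [0, 0] := by
  rw [Ne, quot_eq_iff]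
  intro h
  have := h.perm.subset (show (1:ℕ) ∈ [0, 1] by simp)
  simp at this
theorem lie_fibonacci (n : ℕ) :
    ((n = 0 ∨ (∃ k : ℕ, 4 ≤ k ∧ n = Nat.fib k) ∨
        (∃ k : ℕ, 4 ≤ k ∧ n = Nat.fib k + Nat.fib (k - 3))) →
      LieComplexity fibWord n = 1) ∧
    ((n = 1 ∨ n = 2) → LieComplexity fibWord n = 2) ∧
    (¬ (n = 0 ∨ (∃ k : ℕ, 4 ≤ k ∧ n = Nat.fib k) ∨
        (∃ k : ℕ, 4 ≤ k ∧ n = Nat.fib k + Nat.fib (k - 3)) ∨ n = 1 ∨ n = 2) →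
      LieComplexity fibWord n = 0) := by
  refine ⟨?_, ?_, ?_⟩
  · rintro (rfl | ⟨k, hk, rfl⟩ | ⟨k, hk, rfl⟩)
    · unfold LieComplexity
      rw [S_zero, Set.ncard_singleton]
    · unfold LieComplexity
      rw [S_fib k hk, Set.ncard_singleton]
    · unfold LieComplexity
      rw [show Nat.fib k + Nat.fib (k - 3) = 2 * Nat.fib (k - 1) from fib_identity hk,
        S_two_fib k hk, Set.ncard_singleton]
  · rintro (rfl | rfl)
    · unfold LieComplexity
      rw [S_one, Set.ncard_pair ne_class_01]
    · unfold LieComplexity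
      rw [S_two, Set.ncard_pair ne_class_two]
  · intro h
    push_neg at h
    obtain ⟨h0, h1, h2, h3, h4⟩ := h
    unfold LieComplexity
    rw [S_empty n (by omega) (by
        rintro ⟨k, hk, hnk⟩
        exact absurd hnk (h1 k hk)) (by
        rintro ⟨k, hk, hnk⟩
        exact absurd hnk (h2 k hk)),
      Set.ncard_empty]
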